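/- For any ordering σ of {2,…,n}, the σ-minimal assignment is sd-efficient: if x is not σ-dominated by any other assignment, then x admits no improving cycle. -/
import Mathlib


open Finset

/-- An n×n matrix with nonnegative real entries whose rows and columns each sum to 1. -/
def Bistochastic {n : ℕ} (x : Fin n → Fin n → ℝ) : Prop :=
  (∀ i o, 0 ≤ x i o) ∧ (∀ i, ∑ o, x i o = 1) ∧ (∀ o, ∑ i, x i o = 1)

/-- `tailProb rank x i k` = probability that agent `i` receives an object ranked `k`-th
or worse (ranks are 0-indexed: rank 0 = most preferred). -/
def tailProb {n : ℕ} (rank : Fin n → Fin n → Fin n) (x : Fin n → Fin n → ℝ)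
    (i k : Fin n) : ℝ :=
  ∑ o ∈ Finset.univ.filter (fun o => k ≤ rank i o), x i o

/-- The values of `v` rearranged in non-increasing order. -/
noncomputable def sortedDesc {n : ℕ} (v : Fin n → ℝ) : Fin n → ℝ :=
  fun j => v (Tuple.sort (fun i => -v i) j)

/-- Block `t` of `Bvec rank x` is the non-increasing rearrangement of the tail
probabilities at threshold `n-1-t`; so blocks run from the worst rank down. -/
noncomputable def Bvec {n : ℕ} (rank : Fin n → Fin n → Fin n) (x : Fin n → Fin n → ℝ) :
    Fin n → Fin n → ℝ :=
  fun t => sortedDesc (fun i => tailProb rank x i t.rev)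

/-- Lexicographic strict order on doubly-indexed vectors (outer index first). -/
def BlockLexLt {α β : Type*} [LinearOrder α] [LinearOrder β] (u v : α → β → ℝ) : Prop :=
  ∃ t s, u t s < v t s ∧ ∀ t' s', (t' < t ∨ (t' = t ∧ s' < s)) → u t' s' = v t' s'

/-- `x` Rawlsian-dominates `y`. -/
def RDom {n : ℕ} (rank : Fin n → Fin n → Fin n) (x y : Fin n → Fin n → ℝ) : Prop :=
  BlockLexLt (Bvec rank x) (Bvec rank y)

/-- A Rawlsian assignment: a bistochastic matrix not R-dominated by any other. -/
def Rawlsian {n : ℕ} (rank : Fin n → Fin n → Fin n) (x : Fin n → Fin n → ℝ) : Prop :=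
  Bistochastic x ∧ ∀ y, Bistochastic y → ¬ RDom rank y x

/-- `Bσ`: block `j` is the non-increasing rearrangement of the tail probabilities at
threshold `σ j`. -/
noncomputable def BvecSigma {m : ℕ} (σ : Fin m → Fin (m + 1))
    (rank : Fin (m + 1) → Fin (m + 1) → Fin (m + 1)) (x : Fin (m + 1) → Fin (m + 1) → ℝ) :
    Fin m → Fin (m + 1) → ℝ :=
  fun j => sortedDesc (fun i => tailProb rank x i (σ j))

def SigmaDom {m : ℕ} (σ : Fin m → Fin (m + 1))
    (rank : Fin (m + 1) → Fin (m + 1) → Fin (m + 1)) (x y : Fin (m + 1) → Fin (m + 1) → ℝ) :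
    Prop :=
  BlockLexLt (BvecSigma σ rank x) (BvecSigma σ rank y)

def SigmaMinimal {m : ℕ} (σ : Fin m → Fin (m + 1))
    (rank : Fin (m + 1) → Fin (m + 1) → Fin (m + 1)) (x : Fin (m + 1) → Fin (m + 1) → ℝ) :
    Prop :=
  Bistochastic x ∧ ∀ y, Bistochastic y → ¬ SigmaDom σ rank y x

/-- `x` admits an improving cycle: distinct agents `a 0,…,a K` and distinct objects
`ob 0,…,ob K` with `x (a k) (ob k) > 0` and each agent `a k` strictly preferring
`ob (k-1)` (cyclically) to `ob k`. -/
def HasImprovingCycle {n : ℕ} (rank : Fin n → Fin n → Fin n) (x : Fin n → Fin n → ℝ) : Prop :=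
  ∃ K : ℕ, ∃ a ob : Fin (K + 1) → Fin n, Function.Injective a ∧ Function.Injective ob ∧
    (∀ k, 0 < x (a k) (ob k)) ∧ ∀ k, rank (a k) (ob (k - 1)) < rank (a k) (ob k)

lemma sortedDesc_comp_antitone {n : ℕ} (v : Fin n → ℝ) : Antitone (sortedDesc v) := by
  intro s t hst
  have h := Tuple.monotone_sort (fun i => -v i) hst
  simpa [sortedDesc] using h

lemma sortedDesc_mono {n : ℕ} {w v : Fin n → ℝ} (h : ∀ i, w i ≤ v i) (j : Fin n) :
    sortedDesc w j ≤ sortedDesc v j := by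
  by_contra hlt
  push_neg at hlt
  set π := Tuple.sort (fun i => -w i) with hπ
  set τ := Tuple.sort (fun i => -v i) with hτ
  set c := sortedDesc w j with hc
  have hS : Finset.image π (Finset.Iic j) ⊆ Finset.univ.filter (fun i => c ≤ v i) := by
    intro i hi
    obtain ⟨s, hs, rfl⟩ := Finset.mem_image.1 hi
    have h1 : c ≤ w (π s) := sortedDesc_comp_antitone w (Finset.mem_Iic.1 hs)
    exact Finset.mem_filter.2 ⟨Finset.mem_univ _, h1.trans (h _)⟩
  have hT : Finset.univ.filter (fun i => c ≤ v i) ⊆ Finset.image τ (Finset.Iio j) := by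
    intro i hi
    have hci : c ≤ v i := (Finset.mem_filter.1 hi).2
    refine Finset.mem_image.2 ⟨τ.symm i, Finset.mem_Iio.2 ?_, by simp⟩
    by_contra hs
    push_neg at hs
    have h2 : v (τ (τ.symm i)) ≤ sortedDesc v j := sortedDesc_comp_antitone v hs
    simp only [Equiv.apply_symm_apply] at h2
    exact absurd (hci.trans h2) (not_le.2 hlt)
  have h1 : (Finset.image π (Finset.Iic j)).card = j + 1 := by
    rw [Finset.card_image_of_injective _ π.injective, Fin.card_Iic]
  have h2 : (Finset.image τ (Finset.Iio j)).card ≤ (j : ℕ) :=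
    (Finset.card_image_le).trans_eq (Fin.card_Iio j)
  have := Finset.card_le_card (hS.trans hT)
  omega

lemma sum_sortedDesc {n : ℕ} (v : Fin n → ℝ) : ∑ j, sortedDesc v j = ∑ i, v i :=
  Equiv.sum_comp (Tuple.sort (fun i => -v i)) v

lemma inj_indic_sum {N n : ℕ} {a : Fin N → Fin n} (ha : Function.Injective a)
    (k0 : Fin N) (P : Fin N → Prop) [DecidablePred P] :
    (∑ k, if a k0 = a k ∧ P k then (1:ℝ) else 0) = if P k0 then 1 else 0 := by
  rw [Finset.sum_eq_single k0]
  · simp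
  · intro k _ hk
    rw [if_neg]
    rintro ⟨he, -⟩
    exact hk (ha he.symm)
  · intro h; exact absurd (Finset.mem_univ k0) h

lemma non_indic_sum {N n : ℕ} {a : Fin N → Fin n} {i : Fin n} (h : ∀ k, i ≠ a k)
    (P : Fin N → Prop) [DecidablePred P] :
    (∑ k, if i = a k ∧ P k then (1:ℝ) else 0) = 0 := by
  apply Finset.sum_eq_zero; intro k _; rw [if_neg]; rintro ⟨he, -⟩; exact h k he


/-- For any ordering `σ` of `{2,…,n}`, the σ-minimal assignment admits no improving
cycle (hence is sd-efficient). -/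
theorem sigma_minimal_sdefficient {m : ℕ} (σ : Fin m → Fin (m + 1))
    (hσinj : Function.Injective σ) (hσne : ∀ j, σ j ≠ 0)
    (rank : Fin (m + 1) → Fin (m + 1) → Fin (m + 1))
    (hrank : ∀ i, Function.Bijective (rank i))
    (x : Fin (m + 1) → Fin (m + 1) → ℝ) (hx : SigmaMinimal σ rank x) :
    ¬ HasImprovingCycle rank x := by
  classical
  rintro ⟨K, a, ob, ha, hob, hpos, himp⟩
  obtain ⟨⟨hxnn, hxrow, hxcol⟩, hmin⟩ := hx
  set ε : ℝ := Finset.univ.inf' Finset.univ_nonempty (fun k : Fin (K+1) => x (a k) (ob k)) with hεdef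
  have hεpos : 0 < ε := by
    rw [hεdef, Finset.lt_inf'_iff]; exact fun k _ => hpos k
  have hεle : ∀ k, ε ≤ x (a k) (ob k) := fun k => Finset.inf'_le _ (Finset.mem_univ k)
  set c : Fin (m+1) → Fin (m+1) → ℝ := fun i o =>
    (∑ k, if i = a k ∧ o = ob (k-1) then (1:ℝ) else 0)
      - (∑ k, if i = a k ∧ o = ob k then (1:ℝ) else 0) with hcdef
  set y : Fin (m+1) → Fin (m+1) → ℝ := fun i o => x i o + ε * c i o with hydef
  have hobne : ∀ k : Fin (K+1), ob (k-1) ≠ ob k := by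
    intro k h
    have := himp k
    rw [h] at this
    exact lt_irrefl _ this
  have hc_cyc : ∀ k0 o, c (a k0) o =
      (if o = ob (k0-1) then (1:ℝ) else 0) - (if o = ob k0 then 1 else 0) := by
    intro k0 o
    simp only [hcdef]
    rw [inj_indic_sum ha k0 (fun k => o = ob (k-1)), inj_indic_sum ha k0 (fun k => o = ob k)]
  have hc_non : ∀ i, (∀ k, i ≠ a k) → ∀ o, c i o = 0 := by
    intro i hi o
    simp only [hcdef]
    rw [non_indic_sum hi (fun k => o = ob (k-1)), non_indic_sum hi (fun k => o = ob k), sub_zero]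
  -- y is bistochastic
  have hynn : ∀ i o, 0 ≤ y i o := by
    intro i o
    simp only [hydef]
    by_cases hi : ∃ k, i = a k
    · obtain ⟨k0, rfl⟩ := hi
      rw [hc_cyc]
      by_cases ho : o = ob k0
      · have h1 : ¬ (o = ob (k0 - 1)) := by rw [ho]; exact fun h => hobne k0 h.symm
        rw [if_neg h1, if_pos ho, ho]
        have := hεle k0
        linarith
      · rw [if_neg ho, sub_zero]
        by_cases h1 : o = ob (k0 - 1)
        · rw [if_pos h1]
          nlinarith [hxnn (a k0) o, hεpos]
        · rw [if_neg h1]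
          simpa using hxnn (a k0) o
    · push_neg at hi
      rw [hc_non i hi o, mul_zero, add_zero]
      exact hxnn i o
  have hyrow : ∀ i, ∑ o, y i o = 1 := by
    intro i
    simp only [hydef]
    rw [Finset.sum_add_distrib, hxrow, ← Finset.mul_sum]
    have hc0 : ∑ o, c i o = 0 := by
      simp only [hcdef]
      have hswap : ∀ (f : Fin (m+1) → Fin (K+1) → ℝ),
          ∑ o, ∑ k, f o k = ∑ k, ∑ o, f o k := fun f => Finset.sum_comm
      rw [Finset.sum_sub_distrib, hswap, hswap]
      have hA : ∀ (z : Fin (K+1) → Fin (m+1)),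
          (∑ k, ∑ o, if i = a k ∧ o = z k then (1:ℝ) else 0) = ∑ k, if i = a k then (1:ℝ) else 0 := by
        intro z
        refine Finset.sum_congr rfl fun k _ => ?_
        by_cases hik : i = a k <;> simp [hik]
      rw [hA (fun k => ob (k-1)), hA ob, sub_self]
    rw [hc0, mul_zero, add_zero]
  have hycol : ∀ o, ∑ i, y i o = 1 := by
    intro o
    simp only [hydef]
    rw [Finset.sum_add_distrib, hxcol, ← Finset.mul_sum]
    have hc0 : ∑ i, c i o = 0 := by
      simp only [hcdef]
      have hswap : ∀ (f : Fin (m+1) → Fin (K+1) → ℝ),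
          ∑ i, ∑ k, f i k = ∑ k, ∑ i, f i k := fun f => Finset.sum_comm
      rw [Finset.sum_sub_distrib, hswap, hswap]
      have hA : ∀ (z : Fin (K+1) → Fin (m+1)),
          (∑ k, ∑ i, if i = a k ∧ o = z k then (1:ℝ) else 0) = ∑ k, if o = z k then (1:ℝ) else 0 := by
        intro z
        refine Finset.sum_congr rfl fun k _ => ?_
        by_cases hoz : o = z k <;> simp [hoz]
      rw [hA (fun k => ob (k-1)), hA ob]
      rw [Fintype.sum_equiv (Equiv.subRight (1 : Fin (K+1)))
        (fun k => if o = ob (k-1) then (1:ℝ) else 0) (fun k => if o = ob k then (1:ℝ) else 0)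
        (fun k => rfl), sub_self]
    rw [hc0, mul_zero, add_zero]
  have hybis : Bistochastic y := ⟨hynn, hyrow, hycol⟩
  -- tail probabilities
  have htail : ∀ i t, tailProb rank y i t = tailProb rank x i t
      + ε * ∑ o ∈ Finset.univ.filter (fun o => t ≤ rank i o), c i o := by
    intro i t
    simp only [tailProb, hydef]
    rw [Finset.sum_add_distrib, Finset.mul_sum]
  have hfc : ∀ (k0 : Fin (K+1)) t,
      (∑ o ∈ Finset.univ.filter (fun o => t ≤ rank (a k0) o), c (a k0) o)
        = (if t ≤ rank (a k0) (ob (k0-1)) then (1:ℝ) else 0)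
          - (if t ≤ rank (a k0) (ob k0) then (1:ℝ) else 0) := by
    intro k0 t
    rw [Finset.sum_congr rfl (fun o _ => hc_cyc k0 o), Finset.sum_sub_distrib]
    rw [Finset.sum_ite_eq' _ (ob (k0-1)) (fun _ => (1:ℝ)),
        Finset.sum_ite_eq' _ (ob k0) (fun _ => (1:ℝ))]
    simp [Finset.mem_filter]
  have hmono : ∀ i t, tailProb rank y i t ≤ tailProb rank x i t := by
    intro i t
    rw [htail]
    by_cases hi : ∃ k, i = a k
    · obtain ⟨k0, rfl⟩ := hi
      rw [hfc]
      by_cases hA : t ≤ rank (a k0) (ob (k0-1))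
      · have hB : t ≤ rank (a k0) (ob k0) := hA.trans (himp k0).le
        simp [hA, hB]
      · by_cases hB : t ≤ rank (a k0) (ob k0) <;> simp [hA, hB] <;> nlinarith [hεpos]
    · push_neg at hi
      rw [Finset.sum_eq_zero (fun o _ => hc_non i hi o), mul_zero, add_zero]
  set t0 : Fin (m+1) := rank (a 0) (ob 0) with ht0def
  have hstrict : tailProb rank y (a 0) t0 < tailProb rank x (a 0) t0 := by
    rw [htail, hfc]
    have hA : ¬ (t0 ≤ rank (a 0) (ob (0-1))) := not_le.2 (himp 0)
    rw [if_neg hA, if_pos (le_refl t0)]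
    nlinarith [hεpos]
  -- σ hits t0
  have ht0ne : t0 ≠ 0 := by
    have : (0 : Fin (m+1)) < t0 := (Fin.zero_le _).trans_lt (himp 0)
    exact this.ne'
  have himg : Finset.image σ Finset.univ = Finset.univ.erase 0 := by
    apply Finset.eq_of_subset_of_card_le
    · intro v hv
      obtain ⟨j, _, rfl⟩ := Finset.mem_image.1 hv
      exact Finset.mem_erase.2 ⟨hσne j, Finset.mem_univ _⟩
    · rw [Finset.card_erase_of_mem (Finset.mem_univ 0),
        Finset.card_image_of_injective _ hσinj]
      simp
  obtain ⟨j0, -, hj0⟩ : ∃ j ∈ Finset.univ, σ j = t0 := by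
    have : t0 ∈ Finset.image σ Finset.univ := by
      rw [himg]; exact Finset.mem_erase.2 ⟨ht0ne, Finset.mem_univ _⟩
    exact Finset.mem_image.1 this
  -- blockwise comparison
  have hble : ∀ (j : Fin m) (s : Fin (m+1)),
      BvecSigma σ rank y j s ≤ BvecSigma σ rank x j s := by
    intro j s
    exact sortedDesc_mono (fun i => hmono i (σ j)) s
  have hblockdiff : ∃ s, BvecSigma σ rank y j0 s ≠ BvecSigma σ rank x j0 s := by
    by_contra hall
    push_neg at hall
    have hsum : ∑ s, BvecSigma σ rank y j0 s = ∑ s, BvecSigma σ rank x j0 s :=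
      Finset.sum_congr rfl fun s _ => hall s
    rw [BvecSigma, BvecSigma] at hsum
    rw [sum_sortedDesc, sum_sortedDesc, hj0] at hsum
    have hlt : ∑ i, tailProb rank y i t0 < ∑ i, tailProb rank x i t0 :=
      Finset.sum_lt_sum (fun i _ => hmono i t0) ⟨a 0, Finset.mem_univ _, hstrict⟩
    exact absurd hsum hlt.ne
  -- find the lexicographically first difference
  set T : Finset (Fin m) := Finset.univ.filter
    (fun j => ∃ s, BvecSigma σ rank y j s ≠ BvecSigma σ rank x j s) with hTdef
  have hTne : T.Nonempty := ⟨j0, Finset.mem_filter.2 ⟨Finset.mem_univ _, hblockdiff⟩⟩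
  set j1 : Fin m := T.min' hTne with hj1def
  have hj1T : j1 ∈ T := Finset.min'_mem T hTne
  set S : Finset (Fin (m+1)) := Finset.univ.filter
    (fun s => BvecSigma σ rank y j1 s ≠ BvecSigma σ rank x j1 s) with hSdef
  have hSne : S.Nonempty := by
    obtain ⟨s, hs⟩ := (Finset.mem_filter.1 hj1T).2
    exact ⟨s, Finset.mem_filter.2 ⟨Finset.mem_univ _, hs⟩⟩
  set s1 : Fin (m+1) := S.min' hSne with hs1def
  have hs1S : s1 ∈ S := Finset.min'_mem S hSne
  refine hmin y hybis ⟨j1, s1, lt_of_le_of_ne (hble j1 s1) (Finset.mem_filter.1 hs1S).2, ?_⟩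
  rintro t' s' (ht' | ⟨rfl, hs'⟩)
  · by_contra hne
    have hmem : t' ∈ T := Finset.mem_filter.2 ⟨Finset.mem_univ _, ⟨s', hne⟩⟩
    exact absurd (Finset.min'_le T t' hmem) (not_le.2 ht')
  · by_contra hne
    have hmem : s' ∈ S := Finset.mem_filter.2 ⟨Finset.mem_univ _, hne⟩
    exact absurd (Finset.min'_le S s' hmem) (not_le.2 hs')
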